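/- Core of Proposition 1 (the scheme [[p_c = 1/2^n, X^c Z^c]] is not IND-secure), part 1: let Ψ u = (2^n)^{-1/2} · i^{wt(u)} (the n-fold tensor power of (|0⟩ + i|1⟩)/√2), where wt(u) is the number of indices i with u i = 1, and let σ₁ = Ψ Ψᴴ be the corresponding rank-one projector (outer product of Ψ with its conjugate). Then (1/2^n) • ∑_{c : Fin n → ZMod 2} (X^c * Z^c) * σ₁ * (X^c * Z^c)ᴴ = σ₁; i.e., the ciphertext of σ₁ averaged over all keys c equals σ₁ itself. -/

import Mathlib

open Matrix BigOperators

/-- The inner product `a ⊙ b = ∑ i, a i * b i` in `ZMod 2`. -/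
def bdot {n : ℕ} (a b : Fin n → ZMod 2) : ZMod 2 := ∑ i, a i * b i

/-- `χ(a,b) = (-1)^(a ⊙ b)` as a complex number. -/
noncomputable def chi {n : ℕ} (a b : Fin n → ZMod 2) : ℂ :=
  if bdot a b = 1 then -1 else 1

/-- The `n`-qubit Pauli string `X^a`: `|v⟩ ↦ |v ⊕ a⟩`. -/
noncomputable def PX {n : ℕ} (a : Fin n → ZMod 2) :
    Matrix (Fin n → ZMod 2) (Fin n → ZMod 2) ℂ :=
  fun u v => if u = v + a then 1 else 0

/-- The `n`-qubit Pauli string `Z^b`: `|v⟩ ↦ (-1)^(b ⊙ v) |v⟩`. -/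
noncomputable def PZ {n : ℕ} (b : Fin n → ZMod 2) :
    Matrix (Fin n → ZMod 2) (Fin n → ZMod 2) ℂ :=
  fun u v => if u = v then chi b v else 0

/-- Hamming weight of a bit string. -/
def wt {n : ℕ} (u : Fin n → ZMod 2) : ℕ :=
  (Finset.univ.filter fun i => u i = 1).card

/-- The projector `|Ψ⟩⟨Ψ|` onto the n-fold tensor power of `(|0⟩ + i|1⟩)/√2`. -/
noncomputable def sigma1 (n : ℕ) :
    Matrix (Fin n → ZMod 2) (Fin n → ZMod 2) ℂ :=
  fun u v => ((Real.sqrt (2 ^ n) : ℂ)⁻¹ * Complex.I ^ wt u) *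
    (starRingEnd ℂ) ((Real.sqrt (2 ^ n) : ℂ)⁻¹ * Complex.I ^ wt v)

-- auxiliary lemmas

lemma wt_eq {n : ℕ} (u : Fin n → ZMod 2) : wt u = ∑ i, (u i).val := by
  unfold wt
  rw [Finset.card_filter]
  refine Finset.sum_congr rfl fun i _ => ?_
  have : ∀ a : ZMod 2, (if a = 1 then 1 else 0) = a.val := by decide
  exact this (u i)

lemma chi_eq {n : ℕ} (a b : Fin n → ZMod 2) : chi a b = (-1 : ℂ) ^ (bdot a b).val := by
  unfold chi
  have : bdot a b = 0 ∨ bdot a b = 1 := by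
    generalize bdot a b = x; revert x; decide
  rcases this with h | h <;> simp [h, show ((1:ZMod 2)).val = 1 from rfl]

lemma neg_one_pow_val_add (a b : ZMod 2) :
    ((-1 : ℂ)) ^ (a + b).val = (-1) ^ a.val * (-1) ^ b.val := by
  rcases (by decide : ∀ x : ZMod 2, x = 0 ∨ x = 1) a with rfl | rfl <;>
    rcases (by decide : ∀ x : ZMod 2, x = 0 ∨ x = 1) b with rfl | rfl <;> norm_num [show ((2:ZMod 2)).val = 0 from rfl, show ((1:ZMod 2)).val = 1 from rfl, show ((0:ZMod 2)).val = 0 from rfl, Complex.I_mul_I]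

lemma neg_one_pow_val_sum {ι : Type*} (s : Finset ι) (f : ι → ZMod 2) :
    (-1 : ℂ) ^ (∑ i ∈ s, f i).val = ∏ i ∈ s, (-1 : ℂ) ^ (f i).val := by
  induction s using Finset.cons_induction with
  | empty => simp
  | cons a s ha ih => rw [Finset.sum_cons, Finset.prod_cons, neg_one_pow_val_add, ih]

lemma point (a b : ZMod 2) :
    (-1 : ℂ) ^ (b * (a + b)).val * Complex.I ^ (a + b).val
      = Complex.I ^ a.val * (-Complex.I) ^ b.val := by
  rcases (by decide : ∀ x : ZMod 2, x = 0 ∨ x = 1) a with rfl | rfl <;>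
    rcases (by decide : ∀ x : ZMod 2, x = 0 ∨ x = 1) b with rfl | rfl <;> norm_num [show ((2:ZMod 2)).val = 0 from rfl, show ((1:ZMod 2)).val = 1 from rfl, show ((0:ZMod 2)).val = 0 from rfl, Complex.I_mul_I]

lemma key {n : ℕ} (c u : Fin n → ZMod 2) :
    chi c (u + c) * Complex.I ^ wt (u + c) = Complex.I ^ wt u * (-Complex.I) ^ wt c := by
  rw [chi_eq, wt_eq (u + c), wt_eq u, wt_eq c]
  unfold bdot
  rw [neg_one_pow_val_sum, ← Finset.prod_pow_eq_pow_sum, ← Finset.prod_pow_eq_pow_sum,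
    ← Finset.prod_pow_eq_pow_sum, ← Finset.prod_mul_distrib, ← Finset.prod_mul_distrib]
  exact Finset.prod_congr rfl fun i _ => point (u i) (c i)

lemma neg_eq {n : ℕ} (x : Fin n → ZMod 2) : -x = x := by
  funext i
  have : ∀ a : ZMod 2, -a = a := by decide
  exact this (x i)

lemma conj_chi {n : ℕ} (a b : Fin n → ZMod 2) :
    star (chi a b) = chi a b := by
  unfold chi; split <;> simp

lemma PXZ_apply {n : ℕ} (c u w : Fin n → ZMod 2) :
    (PX c * PZ c) u w = if u = w + c then chi c w else 0 := by
  rw [Matrix.mul_apply]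
  rw [Finset.sum_eq_single w]
  · simp [PX, PZ]
  · intro x _ hx; simp [PX, PZ, hx]
  · simp

lemma conj_fix {n : ℕ} (c : Fin n → ZMod 2) :
    (PX c * PZ c) * sigma1 n * (PX c * PZ c)ᴴ = sigma1 n := by
  ext u v
  rw [Matrix.mul_apply]
  rw [Finset.sum_eq_single (v + c)]
  · rw [Matrix.mul_apply, Finset.sum_eq_single (u + c)]
    · rw [PXZ_apply, Matrix.conjTranspose_apply, PXZ_apply]
      have h1 : u = u + c + c := by
        rw [add_assoc]
        have : c + c = 0 := by funext i; exact (by decide : ∀ a : ZMod 2, a + a = 0) (c i)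
        simp [this]
      have h2 : v = v + c + c := by
        rw [add_assoc]
        have : c + c = 0 := by funext i; exact (by decide : ∀ a : ZMod 2, a + a = 0) (c i)
        simp [this]
      rw [if_pos h1, if_pos h2]
      rw [conj_chi]
      show chi c (u + c) * sigma1 n (u + c) (v + c) * chi c (v + c) = sigma1 n u v
      unfold sigma1
      have hk1 := key c u
      have hk2 := key c v
      have hc2 : (starRingEnd ℂ) (((Real.sqrt (2 ^ n) : ℂ))⁻¹) = ((Real.sqrt (2 ^ n) : ℂ))⁻¹ := by
        rw [map_inv₀, Complex.conj_ofReal]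
      simp only [_root_.map_mul, hc2, map_pow, Complex.conj_I]
      have hk2' : chi c (v + c) * (-Complex.I) ^ wt (v + c)
          = (-Complex.I) ^ wt v * Complex.I ^ wt c := by
        have h := congrArg (starRingEnd ℂ) hk2
        simp only [_root_.map_mul, map_pow, Complex.conj_I, map_neg, neg_neg] at h
        rwa [show (starRingEnd ℂ) (chi c (v + c)) = chi c (v + c) from conj_chi c (v+c)] at h
      have : chi c (u + c) * Complex.I ^ wt (u + c) *
          (chi c (v + c) * (-Complex.I) ^ wt (v + c))
          = Complex.I ^ wt u * (-Complex.I) ^ wt v := by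
        rw [hk1, hk2']
        have hmul : (-Complex.I) ^ wt c * Complex.I ^ wt c = 1 := by
          rw [← mul_pow]
          simp [Complex.I_mul_I]
        rw [mul_mul_mul_comm, hmul, mul_one]
      calc chi c (u + c) *
            ((Real.sqrt (2 ^ n) : ℂ)⁻¹ * Complex.I ^ wt (u + c) *
              ((Real.sqrt (2 ^ n) : ℂ)⁻¹ * (-Complex.I) ^ wt (v + c))) *
            chi c (v + c)
          = (Real.sqrt (2 ^ n) : ℂ)⁻¹ * (Real.sqrt (2 ^ n) : ℂ)⁻¹ *
            (chi c (u + c) * Complex.I ^ wt (u + c) *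
              (chi c (v + c) * (-Complex.I) ^ wt (v + c))) := by ring
        _ = (Real.sqrt (2 ^ n) : ℂ)⁻¹ * (Real.sqrt (2 ^ n) : ℂ)⁻¹ *
            (Complex.I ^ wt u * (-Complex.I) ^ wt v) := by rw [this]
        _ = (Real.sqrt (2 ^ n) : ℂ)⁻¹ * Complex.I ^ wt u *
            ((Real.sqrt (2 ^ n) : ℂ)⁻¹ * (-Complex.I) ^ wt v) := by ring
    · intro w _ hw
      rw [PXZ_apply, if_neg, zero_mul]
      intro h
      apply hw
      rw [h, add_assoc]
      have : c + c = 0 := by funext i; exact (by decide : ∀ a : ZMod 2, a + a = 0) (c i)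
      rw [this, add_zero]
    · simp
  · intro x _ hx
    rw [Matrix.conjTranspose_apply, PXZ_apply, if_neg, star_zero, mul_zero]
    intro h
    apply hx
    rw [h, add_assoc]
    have : c + c = 0 := by funext i; exact (by decide : ∀ a : ZMod 2, a + a = 0) (c i)
    rw [this, add_zero]
  · simp

theorem xz_scheme_fixes_sigma1 (n : ℕ) :
    ((2 : ℂ) ^ n)⁻¹ • ∑ c : Fin n → ZMod 2,
        (PX c * PZ c) * sigma1 n * (PX c * PZ c)ᴴ = sigma1 n := by
  have hsum : ∑ c : Fin n → ZMod 2,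
      (PX c * PZ c) * sigma1 n * (PX c * PZ c)ᴴ
      = (2 ^ n : ℕ) • sigma1 n := by
    rw [Finset.sum_congr rfl fun c _ => conj_fix c, Finset.sum_const]
    congr 1
    simp [Finset.card_univ]
  rw [hsum, ← Nat.cast_smul_eq_nsmul ℂ, smul_smul]
  push_cast
  rw [inv_mul_cancel₀ (pow_ne_zero n two_ne_zero), one_smul]
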